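/- Let f(m) = (m/(m−1))·(exp((m−1)·log(1 + c/m + o(1/m))) − 1) for a constant c ≥ 0. Then lim_{m→∞} f(m) = e^c − 1. In particular, if h₁, h₂ are bounded functions and n₁^m = χ_{Ω₁} + h₁/m + o(1/m), n₂^m = χ_{Ω₂} + h₂/m + o(1/m) with Ω₁ ∩ Ω₂ = ∅, then q_m(n₁^m n₂^m) → χ_{Ω₁}(e^{h₂} − 1) + χ_{Ω₂}(e^{h₁} − 1) pointwise on Ω₁ ∪ Ω₂. -/

import Mathlib

open Filter Topology

lemma log_lin_bound {y : ℝ} (hy : |y| ≤ 1/2) : |Real.log (1 + y) - y| ≤ 2 * y ^ 2 := by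
  have h1 : |(-y)| < 1 := by rw [abs_neg]; linarith
  have := Real.abs_log_sub_add_sum_range_le h1 1
  simp [Finset.sum_range_one] at this
  have heq : Real.log (1 + y) - y = -y + Real.log (1 + y) := by ring
  rw [heq]
  calc |(-y) + Real.log (1 + y)| ≤ y ^ 2 / (1 - |y|) := this
    _ ≤ 2 * y ^ 2 := by
        rw [div_le_iff₀ (by linarith : (0:ℝ) < 1 - |y|)]
        nlinarith [sq_nonneg y, abs_nonneg y]

lemma aux_key (a : ℕ → ℝ) (L : ℝ) (h : Tendsto (fun m : ℕ => (m : ℝ) * a m) atTop (nhds L)) :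
    Tendsto (fun m : ℕ => ((m : ℝ) / ((m : ℝ) - 1)) *
      (Real.exp (((m : ℝ) - 1) * Real.log (1 + a m)) - 1)) atTop (nhds (Real.exp L - 1)) := by
  have hinv : Tendsto (fun m : ℕ => ((m : ℝ))⁻¹) atTop (nhds 0) :=
    tendsto_inv_atTop_nhds_zero_nat
  have ha0 : Tendsto a atTop (nhds 0) := by
    have := h.mul hinv
    rw [mul_zero] at this
    refine this.congr' ?_
    filter_upwards [eventually_ge_atTop 1] with m hm
    field_simp
  have h1 : Tendsto (fun m : ℕ => ((m : ℝ) - 1) * a m) atTop (nhds L) := by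
    have := h.sub ha0
    rw [sub_zero] at this
    exact this.congr (fun m => by ring)
  -- difference tends to 0
  have h2 : Tendsto (fun m : ℕ => ((m : ℝ) - 1) * Real.log (1 + a m) - ((m : ℝ) - 1) * a m)
      atTop (nhds 0) := by
    have hg : Tendsto (fun m : ℕ => 2 * (((m : ℝ) * a m) * a m)) atTop (nhds 0) := by
      have := (h.mul ha0).const_mul 2
      simpa using this
    refine squeeze_zero_norm' ?_ hg
    filter_upwards [ha0.eventually (eventually_abs_sub_lt 0 (by norm_num : (0:ℝ) < 1/2)),
      eventually_ge_atTop 1] with m hm hm1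
    rw [sub_zero] at hm
    have hb := log_lin_bound (le_of_lt hm)
    have hm1' : (1 : ℝ) ≤ (m : ℝ) := by exact_mod_cast hm1
    have : ‖((m : ℝ) - 1) * Real.log (1 + a m) - ((m : ℝ) - 1) * a m‖
        = ((m : ℝ) - 1) * |Real.log (1 + a m) - a m| := by
      rw [Real.norm_eq_abs, ← mul_sub, abs_mul, abs_of_nonneg (by linarith)]
    rw [this]
    calc ((m : ℝ) - 1) * |Real.log (1 + a m) - a m| ≤ ((m : ℝ) - 1) * (2 * a m ^ 2) :=
          mul_le_mul_of_nonneg_left hb (by linarith)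
      _ ≤ 2 * (((m : ℝ) * a m) * a m) := by nlinarith [sq_nonneg (a m)]
  have h3 : Tendsto (fun m : ℕ => ((m : ℝ) - 1) * Real.log (1 + a m)) atTop (nhds L) := by
    have := h2.add h1
    rw [zero_add] at this
    exact this.congr (fun m => by ring)
  have h4 : Tendsto (fun m : ℕ => Real.exp (((m : ℝ) - 1) * Real.log (1 + a m)) - 1)
      atTop (nhds (Real.exp L - 1)) :=
    ((Real.continuous_exp.tendsto L).comp h3).sub tendsto_const_nhds
  have h5 : Tendsto (fun m : ℕ => (m : ℝ) / ((m : ℝ) - 1)) atTop (nhds 1) := by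
    have ht : Tendsto (fun m : ℕ => ((m : ℝ) - 1)) atTop atTop :=
      tendsto_atTop_add_const_right _ _ tendsto_natCast_atTop_atTop
    have := (tendsto_const_nhds : Tendsto (fun _ : ℕ => (1:ℝ)) atTop (nhds 1)).add
      ht.inv_tendsto_atTop
    rw [add_zero] at this
    refine this.congr' ?_
    filter_upwards [eventually_ge_atTop 2] with m hm
    have h2m : (2 : ℝ) ≤ (m : ℝ) := by exact_mod_cast hm
    have hne : (m : ℝ) - 1 ≠ 0 := by linarith
    simp only [Pi.inv_apply]
    field_simp
    ring
  have := h5.mul h4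
  rw [one_mul] at this
  exact this

lemma aux_case (u v : ℕ → ℝ) (p q : ℝ)
    (hu : Tendsto (fun m : ℕ => (m : ℝ) * (u m - 1)) atTop (nhds p))
    (hv : Tendsto (fun m : ℕ => (m : ℝ) * v m) atTop (nhds q)) :
    Tendsto (fun m : ℕ => ((m : ℝ) / ((m : ℝ) - 1)) * ((1 + u m * v m) ^ ((m : ℝ) - 1) - 1))
      atTop (nhds (Real.exp q - 1)) := by
  have hinv : Tendsto (fun m : ℕ => ((m : ℝ))⁻¹) atTop (nhds 0) :=
    tendsto_inv_atTop_nhds_zero_nat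
  have hu1 : Tendsto u atTop (nhds 1) := by
    have h0 := hu.mul hinv
    rw [mul_zero] at h0
    have h' : Tendsto (fun m : ℕ => u m - 1) atTop (nhds 0) := by
      refine h0.congr' ?_
      filter_upwards [eventually_ge_atTop 1] with m hm
      have : (m : ℝ) ≠ 0 := by positivity
      field_simp
    have := h'.add (tendsto_const_nhds (x := (1:ℝ)))
    rw [zero_add] at this
    exact this.congr (fun m => by ring)
  have hma : Tendsto (fun m : ℕ => (m : ℝ) * (u m * v m)) atTop (nhds q) := by
    have := hv.mul hu1
    rw [mul_one] at this
    exact this.congr (fun m => by ring)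
  have ha0 : Tendsto (fun m : ℕ => u m * v m) atTop (nhds 0) := by
    have := hma.mul hinv
    rw [mul_zero] at this
    refine this.congr' ?_
    filter_upwards [eventually_ge_atTop 1] with m hm
    have : (m : ℝ) ≠ 0 := by positivity
    field_simp
  refine (aux_key (fun m => u m * v m) q hma).congr' ?_
  filter_upwards [ha0.eventually (eventually_abs_sub_lt 0 (by norm_num : (0:ℝ) < 1/2))]
    with m hm
  rw [sub_zero] at hm
  have hpos : 0 < 1 + u m * v m := by
    have := abs_lt.mp hm
    linarith [this.1]
  rw [Real.rpow_def_of_pos hpos, mul_comm (Real.log _)]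

/-- 'ghost effect': with `f(m) = (m/(m−1))(exp((m−1)log(1 + c/m + o(1/m))) − 1)`,
`f(m) → e^c − 1`. In particular, if `n₁^m = χ_{Ω₁} + h₁/m + o(1/m)` and
`n₂^m = χ_{Ω₂} + h₂/m + o(1/m)` pointwise, with `h₁, h₂` bounded and `Ω₁ ∩ Ω₂ = ∅`, then
`q_m(n₁^m n₂^m) → χ_{Ω₁}(e^{h₂} − 1) + χ_{Ω₂}(e^{h₁} − 1)` pointwise on `Ω₁ ∪ Ω₂`. -/
theorem stmt_17 {α : Type*} (c : ℝ) (hc : 0 ≤ c) (e : ℕ → ℝ)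
    (he : Tendsto (fun m : ℕ => (m : ℝ) * e m) atTop (nhds 0))
    (Ω₁ Ω₂ : Set α) (hdisj : Disjoint Ω₁ Ω₂)
    (h₁ h₂ : α → ℝ) (hb₁ : ∃ M, ∀ x, |h₁ x| ≤ M) (hb₂ : ∃ M, ∀ x, |h₂ x| ≤ M)
    (n₁ n₂ : ℕ → α → ℝ)
    (hn₁ : ∀ x, Tendsto (fun m : ℕ => (m : ℝ) * (n₁ m x - Set.indicator Ω₁ 1 x))
      atTop (nhds (h₁ x)))
    (hn₂ : ∀ x, Tendsto (fun m : ℕ => (m : ℝ) * (n₂ m x - Set.indicator Ω₂ 1 x))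
      atTop (nhds (h₂ x))) :
    Tendsto (fun m : ℕ => ((m : ℝ) / ((m : ℝ) - 1)) *
        (Real.exp (((m : ℝ) - 1) * Real.log (1 + c / (m : ℝ) + e m)) - 1))
      atTop (nhds (Real.exp c - 1)) ∧
    ∀ x ∈ Ω₁ ∪ Ω₂,
      Tendsto (fun m : ℕ => ((m : ℝ) / ((m : ℝ) - 1)) *
          ((1 + n₁ m x * n₂ m x) ^ ((m : ℝ) - 1) - 1))
        atTop (nhds (Set.indicator Ω₁ 1 x * (Real.exp (h₂ x) - 1)
          + Set.indicator Ω₂ 1 x * (Real.exp (h₁ x) - 1))) := by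
  constructor
  · have hmc : Tendsto (fun m : ℕ => (m : ℝ) * (c / (m : ℝ) + e m)) atTop (nhds c) := by
      have := (tendsto_const_nhds (x := c)).add he
      rw [add_zero] at this
      refine this.congr' ?_
      filter_upwards [eventually_ge_atTop 1] with m hm
      have : (m : ℝ) ≠ 0 := by positivity
      field_simp
    exact (aux_key (fun m => c / (m : ℝ) + e m) c hmc).congr
      (fun m => by rw [add_assoc])
  · intro x hx
    rcases hx with hx | hx
    · have hx2 : x ∉ Ω₂ := Set.disjoint_left.mp hdisj hx
      have hu := hn₁ x
      have hv := hn₂ x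
      rw [Set.indicator_of_mem hx] at hu
      rw [Set.indicator_of_notMem hx2] at hv
      simp only [Pi.one_apply] at hu
      simp only [sub_zero] at hv
      have := aux_case (fun m => n₁ m x) (fun m => n₂ m x) (h₁ x) (h₂ x) hu hv
      simpa [Set.indicator_of_mem hx, Set.indicator_of_notMem hx2] using this
    · have hx1 : x ∉ Ω₁ := Set.disjoint_right.mp hdisj hx
      have hu := hn₂ x
      have hv := hn₁ x
      rw [Set.indicator_of_mem hx] at hu
      rw [Set.indicator_of_notMem hx1] at hv
      simp only [Pi.one_apply] at hu
      simp only [sub_zero] at hv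
      have := aux_case (fun m => n₂ m x) (fun m => n₁ m x) (h₂ x) (h₁ x) hu hv
      have h' := this.congr (fun m => by rw [mul_comm (n₂ m x) (n₁ m x)])
      simpa [Set.indicator_of_mem hx, Set.indicator_of_notMem hx1] using h'
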